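/- Let L and L' be two parallel lines in ℝ³ at distance 1, spanning a plane P. Then any line at distance exactly 1 from both L and L' must lie in one of the two planes parallel to P at distance 1 from P, unless it is itself parallel to L; moreover, any collection of lines in ℝ³ pairwise at distance 1 that contains two parallel lines and no third line parallel to them has at most 4 elements. -/

import Mathlib

open scoped RealInnerProductSpace

section Helpers
open Module Submodule
noncomputable section
local notation "E" => EuclideanSpace ℝ (Fin 3)

lemma orthonormal_triple (e1 e2 e3 : E) (h1 : ‖e1‖ = 1) (h2 : ‖e2‖ = 1) (h3 : ‖e3‖ = 1)
    (h12 : ⟪e1, e2⟫ = 0) (h13 : ⟪e1, e3⟫ = 0) (h23 : ⟪e2, e3⟫ = 0) :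
    Orthonormal ℝ ![e1, e2, e3] := by
  have h11 : ⟪e1, e1⟫ = 1 := by rw [real_inner_self_eq_norm_mul_norm, h1]; norm_num
  have h22 : ⟪e2, e2⟫ = 1 := by rw [real_inner_self_eq_norm_mul_norm, h2]; norm_num
  have h33 : ⟪e3, e3⟫ = 1 := by rw [real_inner_self_eq_norm_mul_norm, h3]; norm_num
  have h21 : ⟪e2, e1⟫ = 0 := by rw [real_inner_comm]; exact h12
  have h31 : ⟪e3, e1⟫ = 0 := by rw [real_inner_comm]; exact h13
  have h32 : ⟪e3, e2⟫ = 0 := by rw [real_inner_comm]; exact h23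
  rw [orthonormal_iff_ite]
  intro i j
  fin_cases i <;> fin_cases j <;>
    simp only [Matrix.cons_val_zero, Matrix.cons_val_one, Matrix.head_cons, Fin.mk_zero,
      Fin.mk_one, Matrix.cons_val_two, Matrix.tail_cons, Fin.isValue] <;>
    first
      | exact h11 | exact h22 | exact h33
      | simpa using h12 | simpa using h13 | simpa using h23
      | simpa using h21 | simpa using h31 | simpa using h32
      | simp [h11, h22, h33, h12, h13, h23, h21, h31, h32]

lemma repr_triple (e1 e2 e3 : E) (h : Orthonormal ℝ ![e1, e2, e3]) (v : E) :
    v = ⟪e1, v⟫ • e1 + ⟪e2, v⟫ • e2 + ⟪e3, v⟫ • e3 := by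
  have hcard : Fintype.card (Fin 3) = Module.finrank ℝ E := by simp
  have hsp := (basisOfOrthonormalOfCardEqFinrank h hcard).span_eq
  rw [coe_basisOfOrthonormalOfCardEqFinrank h hcard] at hsp
  have hv : v ∈ Submodule.span ℝ (Set.range ![e1, e2, e3]) := hsp ▸ Submodule.mem_top
  rw [mem_span_range_iff_exists_fun] at hv
  obtain ⟨c, hc⟩ := hv
  rw [Fin.sum_univ_three] at hc
  simp only [Matrix.cons_val_zero, Matrix.cons_val_one, Matrix.head_cons,
    Matrix.cons_val_two, Matrix.tail_cons] at hc
  have ho := orthonormal_iff_ite.mp h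
  have h11 : ⟪e1, e1⟫ = (1:ℝ) := by simpa using ho 0 0
  have h12 : ⟪e1, e2⟫ = (0:ℝ) := by simpa using ho 0 1
  have h13 : ⟪e1, e3⟫ = (0:ℝ) := by simpa using ho 0 2
  have h21 : ⟪e2, e1⟫ = (0:ℝ) := by simpa using ho 1 0
  have h22 : ⟪e2, e2⟫ = (1:ℝ) := by simpa using ho 1 1
  have h23 : ⟪e2, e3⟫ = (0:ℝ) := by simpa using ho 1 2
  have h31 : ⟪e3, e1⟫ = (0:ℝ) := by simpa using ho 2 0
  have h32 : ⟪e3, e2⟫ = (0:ℝ) := by simpa using ho 2 1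
  have h33 : ⟪e3, e3⟫ = (1:ℝ) := by simpa using ho 2 2
  rw [← hc]
  simp only [inner_add_right, real_inner_smul_right, h11, h12, h13, h21, h22, h23, h31, h32, h33]
  module

lemma parseval_triple (e1 e2 e3 : E) (h : Orthonormal ℝ ![e1, e2, e3]) (v : E) :
    ‖v‖ ^ 2 = ⟪e1, v⟫ ^ 2 + ⟪e2, v⟫ ^ 2 + ⟪e3, v⟫ ^ 2 := by
  have ho := orthonormal_iff_ite.mp h
  have h11 : ⟪e1, e1⟫ = (1:ℝ) := by simpa using ho 0 0
  have h12 : ⟪e1, e2⟫ = (0:ℝ) := by simpa using ho 0 1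
  have h13 : ⟪e1, e3⟫ = (0:ℝ) := by simpa using ho 0 2
  have h21 : ⟪e2, e1⟫ = (0:ℝ) := by simpa using ho 1 0
  have h22 : ⟪e2, e2⟫ = (1:ℝ) := by simpa using ho 1 1
  have h23 : ⟪e2, e3⟫ = (0:ℝ) := by simpa using ho 1 2
  have h31 : ⟪e3, e1⟫ = (0:ℝ) := by simpa using ho 2 0
  have h32 : ⟪e3, e2⟫ = (0:ℝ) := by simpa using ho 2 1
  have h33 : ⟪e3, e3⟫ = (1:ℝ) := by simpa using ho 2 2
  have hrepr := repr_triple e1 e2 e3 h v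
  have : ‖v‖ ^ 2 = ⟪v, v⟫ := (real_inner_self_eq_norm_sq v).symm
  rw [this]
  conv_lhs => rw [hrepr]
  simp only [inner_add_left, inner_add_right, real_inner_smul_left, real_inner_smul_right,
    h11, h12, h13, h21, h22, h23, h31, h32, h33]
  ring

lemma exists_unit_orth (x y : E) : ∃ z : E, ‖z‖ = 1 ∧ ⟪x, z⟫ = 0 ∧ ⟪y, z⟫ = 0 := by
  classical
  have hfr : finrank ℝ E = 3 := by simp
  set K : Submodule ℝ E := Submodule.span ℝ {x, y} with hK
  have hKle : finrank ℝ K ≤ 2 := by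
    have h1 := finrank_span_finset_le_card (R := ℝ) ({x, y} : Finset E)
    have h2 : (({x, y} : Finset E) : Set E) = ({x, y} : Set E) := by simp
    rw [h2] at h1
    refine (by exact h1 : finrank ℝ K ≤ ({x,y} : Finset E).card).trans ?_
    exact (Finset.card_insert_le _ _).trans (by simp)
  have horth : Kᗮ ≠ ⊥ := by
    intro hbot
    have := Submodule.finrank_add_finrank_orthogonal K
    rw [hbot] at this
    simp [hfr] at this
    omega
  obtain ⟨w, hwK, hw0⟩ := Submodule.exists_mem_ne_zero_of_ne_bot horth
  refine ⟨‖w‖⁻¹ • w, ?_, ?_, ?_⟩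
  · rw [norm_smul, norm_inv, norm_norm, inv_mul_cancel₀ (norm_ne_zero_iff.mpr hw0)]
  · rw [real_inner_smul_right,
      (Submodule.mem_orthogonal K w).mp hwK x (Submodule.subset_span (by simp))]
    ring
  · rw [real_inner_smul_right,
      (Submodule.mem_orthogonal K w).mp hwK y (Submodule.subset_span (by simp))]
    ring

lemma orth2_sign (x y z z' : E) (hxy : LinearIndependent ℝ ![x, y])
    (hz1 : ⟪x, z⟫ = 0) (hz2 : ⟪y, z⟫ = 0) (hz'1 : ⟪x, z'⟫ = 0) (hz'2 : ⟪y, z'⟫ = 0)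
    (hnz : ‖z‖ = 1) (hnz' : ‖z'‖ = 1) : z' = z ∨ z' = -z := by
  have hfr : finrank ℝ E = 3 := by simp
  set K : Submodule ℝ E := Submodule.span ℝ {x, y} with hK
  have hKfr : finrank ℝ K = 2 := by
    have : Set.range ![x, y] = {x, y} := by
      ext v; simp [Matrix.range_cons, Matrix.range_empty, or_comm]
    have h2 := finrank_span_eq_card hxy
    rw [this] at h2
    simpa using h2
  have hzK : z ∈ Kᗮ := by
    rw [Submodule.mem_orthogonal]
    intro u hu
    obtain ⟨s, t, rfl⟩ := Submodule.mem_span_pair.mp hu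
    rw [inner_add_left, real_inner_smul_left, real_inner_smul_left, hz1, hz2]; ring
  have hz'K : z' ∈ Kᗮ := by
    rw [Submodule.mem_orthogonal]
    intro u hu
    obtain ⟨s, t, rfl⟩ := Submodule.mem_span_pair.mp hu
    rw [inner_add_left, real_inner_smul_left, real_inner_smul_left, hz'1, hz'2]; ring
  have hKo : finrank ℝ (Kᗮ : Submodule ℝ E) = 1 := by
    have := Submodule.finrank_add_finrank_orthogonal K
    rw [hKfr, hfr] at this; omega
  have hz0 : z ≠ 0 := by intro h; rw [h] at hnz; simp at hnz
  have hsp : Submodule.span ℝ {z} = Kᗮ := by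
    apply Submodule.eq_of_le_of_finrank_le
    · rw [Submodule.span_le]; simp [hzK]
    · rw [hKo]
      have : finrank ℝ (Submodule.span ℝ ({z} : Set E)) = 1 := finrank_span_singleton hz0
      omega
  have : z' ∈ Submodule.span ℝ ({z} : Set E) := hsp ▸ hz'K
  obtain ⟨c, rfl⟩ := Submodule.mem_span_singleton.mp this
  rw [norm_smul, hnz, mul_one] at hnz'
  rcases abs_eq (by norm_num : (0:ℝ) ≤ 1) |>.mp (by simpa using hnz') with h | h
  · left; rw [h, one_smul]
  · right; rw [h]; module

lemma mem_span_pair_of_orth (x y z v : E) (hxy : LinearIndependent ℝ ![x, y])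
    (hzx : ⟪z, x⟫ = 0) (hzy : ⟪z, y⟫ = 0) (hz : z ≠ 0) (hzv : ⟪z, v⟫ = 0) :
    ∃ s t : ℝ, v = s • x + t • y := by
  have hcard : Fintype.card (Fin 3) = finrank ℝ E := by simp
  have hind : LinearIndependent ℝ ![z, x, y] := by
    rw [show ![z, x, y] = Fin.cons z ![x, y] from rfl, linearIndependent_fin_cons]
    refine ⟨hxy, ?_⟩
    intro hmem
    have : Set.range ![x, y] = {x, y} := by
      ext v; simp [Matrix.range_cons, Matrix.range_empty, or_comm]
    rw [this] at hmem
    obtain ⟨s, t, hst⟩ := Submodule.mem_span_pair.mp hmem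
    have : ⟪z, z⟫ = (0:ℝ) := by
      nth_rewrite 2 [← hst]
      rw [inner_add_right, real_inner_smul_right, real_inner_smul_right, hzx, hzy]; ring
    exact hz (inner_self_eq_zero.mp this)
  have hsp : ⊤ ≤ Submodule.span ℝ (Set.range ![z, x, y]) :=
    (LinearIndependent.span_eq_top_of_card_eq_finrank hind hcard).ge
  have hv : v ∈ Submodule.span ℝ (Set.range ![z, x, y]) := hsp trivial
  rw [mem_span_range_iff_exists_fun] at hv
  obtain ⟨c, hc⟩ := hv
  rw [Fin.sum_univ_three] at hc
  simp only [Matrix.cons_val_zero, Matrix.cons_val_one, Matrix.head_cons,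
    Matrix.cons_val_two, Matrix.tail_cons] at hc
  have hc0 : c 0 = 0 := by
    have := hzv
    rw [← hc, inner_add_right, inner_add_right, real_inner_smul_right, real_inner_smul_right,
      real_inner_smul_right, hzx, hzy, real_inner_self_eq_norm_sq] at this
    have hnz : ‖z‖ ^ 2 ≠ 0 := pow_ne_zero _ (norm_ne_zero_iff.mpr hz)
    have h0 : c 0 * ‖z‖ ^ 2 = 0 := by linarith
    rcases mul_eq_zero.mp h0 with h | h
    · exact h
    · exact absurd h hnz
  refine ⟨c 1, c 2, ?_⟩
  rw [← hc, hc0]; module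

noncomputable def proj (e w : E) : E := w - (⟪e, w⟫ / ‖e‖ ^ 2) • e

lemma proj_inner (e w : E) (he : e ≠ 0) : ⟪e, proj e w⟫ = 0 := by
  have hne : ‖e‖ ^ 2 ≠ 0 := pow_ne_zero _ (norm_ne_zero_iff.mpr he)
  rw [proj, inner_sub_right, real_inner_smul_right, ← real_inner_self_eq_norm_sq]
  rw [real_inner_self_eq_norm_sq] at *
  field_simp
  ring

lemma proj_decomp (e w : E) (c : ℝ) :
    w + c • e = proj e w + (⟪e, w⟫ / ‖e‖ ^ 2 + c) • e := by
  rw [proj]; module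

lemma norm_proj_add (e w : E) (he : e ≠ 0) (c : ℝ) :
    ‖w + c • e‖ ^ 2 = ‖proj e w‖ ^ 2 + (⟪e, w⟫ / ‖e‖ ^ 2 + c) ^ 2 * ‖e‖ ^ 2 := by
  rw [proj_decomp e w c]
  rw [norm_add_sq_real]
  have : ⟪proj e w, (⟪e, w⟫ / ‖e‖ ^ 2 + c) • e⟫ = 0 := by
    rw [real_inner_smul_right, real_inner_comm e (proj e w), proj_inner e w he]; ring
  rw [this, norm_smul]
  simp [mul_pow, sq_abs]
  try ring

lemma parallel_gap (e w : E) (he : e ≠ 0)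
    (h1 : ∀ c : ℝ, 1 ≤ ‖w + c • e‖) (h2 : ∃ c : ℝ, ‖w + c • e‖ = 1) :
    ‖proj e w‖ = 1 := by
  have hne : ‖e‖ ^ 2 ≠ 0 := pow_ne_zero _ (norm_ne_zero_iff.mpr he)
  have hle : 1 ≤ ‖proj e w‖ := by
    have := h1 (-(⟪e, w⟫ / ‖e‖ ^ 2))
    have hn := norm_proj_add e w he (-(⟪e, w⟫ / ‖e‖ ^ 2))
    simp only [add_neg_cancel] at hn
    rw [show (0:ℝ)^2 * ‖e‖^2 = 0 by ring, add_zero] at hn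
    nlinarith [norm_nonneg (proj e w), norm_nonneg (w + (-(⟪e, w⟫ / ‖e‖ ^ 2)) • e)]
  have hge : ‖proj e w‖ ≤ 1 := by
    obtain ⟨c, hc⟩ := h2
    have hn := norm_proj_add e w he c
    rw [hc] at hn
    nlinarith [norm_nonneg (proj e w), sq_nonneg ((⟪e, w⟫ / ‖e‖ ^ 2 + c)), sq_nonneg ‖e‖, norm_nonneg e]
  linarith

lemma proj_sub (e w1 w2 : E) : proj e (w2 - w1) = proj e w2 - proj e w1 := by
  simp only [proj, inner_sub_right, sub_div, sub_smul]
  module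

lemma proj_orth (e w n : E) (hn : ⟪n, w⟫ = 0) (hne : ⟪n, e⟫ = 0) : ⟪n, proj e w⟫ = 0 := by
  rw [proj, inner_sub_right, real_inner_smul_right, hn, hne]; ring

lemma quad_stationary (s c : ℝ) (hs : 0 < s) (h : ∀ ε : ℝ, 0 ≤ 2 * ε * c + ε ^ 2 * s) :
    c = 0 := by
  have h' := h (-(c / s))
  have hs' : s ≠ 0 := ne_of_gt hs
  have hkey : 2 * (-(c / s)) * c + (-(c / s)) ^ 2 * s = -(c ^ 2 / s) := by field_simp; ring
  rw [hkey] at h'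
  have h2 : c ^ 2 / s ≤ 0 := by linarith
  have h3 : c ^ 2 ≤ 0 := by
    by_contra hc
    push_neg at hc
    have : 0 < c ^ 2 / s := div_pos hc hs
    linarith
  nlinarith [sq_nonneg c]

lemma twoD (β₀ γ₀ p q : ℝ)
    (F1 : ∀ t : ℝ, 1 ≤ (β₀ + t * p) ^ 2 + (γ₀ + t * q) ^ 2)
    (F2 : ∃ t : ℝ, (β₀ + t * p) ^ 2 + (γ₀ + t * q) ^ 2 = 1)
    (G1 : ∀ t : ℝ, 1 ≤ (β₀ + t * p - 1) ^ 2 + (γ₀ + t * q) ^ 2)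
    (G2 : ∃ t : ℝ, (β₀ + t * p - 1) ^ 2 + (γ₀ + t * q) ^ 2 = 1) :
    (p = 0 ∧ q = 0) ∨ (q = 0 ∧ γ₀ ^ 2 = 1) := by
  by_cases hs : p ^ 2 + q ^ 2 = 0
  · left
    constructor <;> nlinarith [sq_nonneg p, sq_nonneg q]
  · right
    have hs' : 0 < p ^ 2 + q ^ 2 := lt_of_le_of_ne (by positivity) (Ne.symm hs)
    obtain ⟨t1, ht1⟩ := F2
    obtain ⟨t2, ht2⟩ := G2
    have hc1 : p * (β₀ + t1 * p) + q * (γ₀ + t1 * q) = 0 := by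
      apply quad_stationary _ _ hs'
      intro ε
      have hF := F1 (t1 + ε)
      have key : 2 * ε * (p * (β₀ + t1 * p) + q * (γ₀ + t1 * q)) + ε ^ 2 * (p ^ 2 + q ^ 2)
          = ((β₀ + (t1 + ε) * p) ^ 2 + (γ₀ + (t1 + ε) * q) ^ 2)
            - ((β₀ + t1 * p) ^ 2 + (γ₀ + t1 * q) ^ 2) := by ring
      rw [key, ht1]; linarith
    have hc2 : p * (β₀ + t2 * p - 1) + q * (γ₀ + t2 * q) = 0 := by
      apply quad_stationary _ _ hs'
      intro ε
      have hG := G1 (t2 + ε)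
      have key : 2 * ε * (p * (β₀ + t2 * p - 1) + q * (γ₀ + t2 * q)) + ε ^ 2 * (p ^ 2 + q ^ 2)
          = ((β₀ + (t2 + ε) * p - 1) ^ 2 + (γ₀ + (t2 + ε) * q) ^ 2)
            - ((β₀ + t2 * p - 1) ^ 2 + (γ₀ + t2 * q) ^ 2) := by ring
      rw [key, ht2]; linarith
    have hδs : (t2 - t1) * (p ^ 2 + q ^ 2) = p := by linear_combination hc2 - hc1
    have h2b : 2 * (β₀ + t1 * p) * (p ^ 2 + q ^ 2) = q ^ 2 := by
      linear_combination (-(p ^ 2 + q ^ 2)) * ht2 + (p ^ 2 + q ^ 2) * ht1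
        + 2 * (p ^ 2 + q ^ 2) * (t2 - t1) * hc1 + ((t2 - t1) * (p ^ 2 + q ^ 2) - p) * hδs
    have hb2 : (β₀ + t1 * p) ^ 2 * (p ^ 2 + q ^ 2) = q ^ 2 := by
      linear_combination (p * (β₀ + t1 * p) - q * (γ₀ + t1 * q)) * hc1 + q ^ 2 * ht1
    have hfac : ((β₀ + t1 * p) ^ 2 - 2 * (β₀ + t1 * p)) * (p ^ 2 + q ^ 2) = 0 := by
      linear_combination hb2 - h2b
    have hβ10 : β₀ + t1 * p = 0 := by
      rcases mul_eq_zero.mp hfac with h | h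
      · rcases mul_eq_zero.mp (by linear_combination h :
          (β₀ + t1 * p) * ((β₀ + t1 * p) - 2) = 0) with h' | h'
        · exact h'
        · exfalso; nlinarith [ht1, sq_nonneg (γ₀ + t1 * q)]
      · exact absurd h hs
    have hq : q = 0 := by
      have : q ^ 2 = 0 := by linear_combination -h2b + 2 * (p ^ 2 + q ^ 2) * hβ10
      exact pow_eq_zero_iff (by norm_num) |>.mp this
    refine ⟨hq, ?_⟩
    linear_combination ht1 - (β₀ + t1 * p) * hβ10 - (2 * t1 * γ₀ + t1 ^ 2 * q) * hq
lemma dist_line_sq_lower (e1 e2 e3 : E) (hON : Orthonormal ℝ ![e1, e2, e3])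
    (d : E) (hd : d ≠ 0) (he1d : ⟪e1, d⟫ = ‖d‖) (h2d : ⟪e2, d⟫ = 0) (h3d : ⟪e3, d⟫ = 0)
    (c x : E) (H : ∀ r : ℝ, 1 ≤ dist x (c + r • d)) :
    1 ≤ ⟪e2, x - c⟫ ^ 2 + ⟪e3, x - c⟫ ^ 2 := by
  set r := ⟪e1, x - c⟫ / ‖d‖ with hr
  have h := H r
  rw [dist_eq_norm] at h
  have hxy : x - (c + r • d) = (x - c) - r • d := by module
  rw [hxy] at h
  have hp := parseval_triple e1 e2 e3 hON ((x - c) - r • d)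
  have hdn : ‖d‖ ≠ 0 := norm_ne_zero_iff.mpr hd
  have h1 : ⟪e1, (x - c) - r • d⟫ = 0 := by
    rw [inner_sub_right, real_inner_smul_right, he1d, hr]; field_simp; ring
  have h2 : ⟪e2, (x - c) - r • d⟫ = ⟪e2, x - c⟫ := by
    rw [inner_sub_right, real_inner_smul_right, h2d]; ring
  have h3 : ⟪e3, (x - c) - r • d⟫ = ⟪e3, x - c⟫ := by
    rw [inner_sub_right, real_inner_smul_right, h3d]; ring
  rw [h1, h2, h3] at hp
  nlinarith [h, norm_nonneg ((x - c) - r • d)]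

lemma dist_line_sq_upper (e1 e2 e3 : E) (hON : Orthonormal ℝ ![e1, e2, e3])
    (d : E) (h2d : ⟪e2, d⟫ = 0) (h3d : ⟪e3, d⟫ = 0)
    (c x : E) (r : ℝ) (H : dist x (c + r • d) = 1) :
    ⟪e2, x - c⟫ ^ 2 + ⟪e3, x - c⟫ ^ 2 ≤ 1 := by
  rw [dist_eq_norm] at H
  have hxy : x - (c + r • d) = (x - c) - r • d := by module
  rw [hxy] at H
  have hp := parseval_triple e1 e2 e3 hON ((x - c) - r • d)
  have h2 : ⟪e2, (x - c) - r • d⟫ = ⟪e2, x - c⟫ := by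
    rw [inner_sub_right, real_inner_smul_right, h2d]; ring
  have h3 : ⟪e3, (x - c) - r • d⟫ = ⟪e3, x - c⟫ := by
    rw [inner_sub_right, real_inner_smul_right, h3d]; ring
  rw [h2, h3, H] at hp
  nlinarith [sq_nonneg ⟪e1, (x - c) - r • d⟫]

lemma partA : ∀ (a a' d : EuclideanSpace ℝ (Fin 3)), d ≠ 0 →
    ∀ (L L' : Set (EuclideanSpace ℝ (Fin 3))),
    L = {x | ∃ t : ℝ, x = a + t • d} → L' = {x | ∃ t : ℝ, x = a' + t • d} →
    ((∀ x ∈ L, ∀ y ∈ L', 1 ≤ dist x y) ∧ (∃ x ∈ L, ∃ y ∈ L', dist x y = 1)) →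
    ∀ (b dM : EuclideanSpace ℝ (Fin 3)), dM ≠ 0 →
    ∀ (M : Set (EuclideanSpace ℝ (Fin 3))), M = {x | ∃ t : ℝ, x = b + t • dM} →
    ((∀ x ∈ M, ∀ y ∈ L, 1 ≤ dist x y) ∧ (∃ x ∈ M, ∃ y ∈ L, dist x y = 1)) →
    ((∀ x ∈ M, ∀ y ∈ L', 1 ≤ dist x y) ∧ (∃ x ∈ M, ∃ y ∈ L', dist x y = 1)) →
    (∃ c : ℝ, dM = c • d) ∨
    (∃ nv : EuclideanSpace ℝ (Fin 3), ‖nv‖ = 1 ∧ ⟪nv, d⟫ = 0 ∧ ⟪nv, a' - a⟫ = 0 ∧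
      ∀ x ∈ M, ⟪x - a, nv⟫ = 1) := by
  intro a a' d hd L L' hL hL' hLL b dM hdM M hM hML hML'
  obtain ⟨hLL1, hLL2⟩ := hLL
  obtain ⟨hML1, hML2⟩ := hML
  obtain ⟨hML'1, hML'2⟩ := hML'
  have hdn : ‖d‖ ≠ 0 := norm_ne_zero_iff.mpr hd
  -- the unit separation vector u
  have hu1 : ∀ c : ℝ, 1 ≤ ‖(a' - a) + c • d‖ := by
    intro c
    have hmem1 : a ∈ L := by rw [hL]; exact ⟨0, by simp⟩
    have hmem2 : a' + c • d ∈ L' := by rw [hL']; exact ⟨c, rfl⟩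
    have h := hLL1 a hmem1 (a' + c • d) hmem2
    rw [dist_eq_norm] at h
    have he : a - (a' + c • d) = -((a' - a) + c • d) := by module
    rwa [he, norm_neg] at h
  have hu2 : ∃ c : ℝ, ‖(a' - a) + c • d‖ = 1 := by
    obtain ⟨x, hx, y, hy, hxy⟩ := hLL2
    rw [hL] at hx; rw [hL'] at hy
    obtain ⟨t, rfl⟩ := hx
    obtain ⟨r, rfl⟩ := hy
    refine ⟨r - t, ?_⟩
    rw [dist_eq_norm] at hxy
    have he : a + t • d - (a' + r • d) = -((a' - a) + (r - t) • d) := by module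
    rwa [he, norm_neg] at hxy
  set u : EuclideanSpace ℝ (Fin 3) := proj d (a' - a) with hu_def
  have hu : ‖u‖ = 1 := parallel_gap d (a' - a) hd hu1 hu2
  have hdu : ⟪d, u⟫ = 0 := proj_inner d (a' - a) hd
  -- e1
  set e1 : EuclideanSpace ℝ (Fin 3) := ‖d‖⁻¹ • d with he1_def
  have he1 : ‖e1‖ = 1 := by
    rw [he1_def, norm_smul, norm_inv, norm_norm, inv_mul_cancel₀ hdn]
  have he1d : ⟪e1, d⟫ = ‖d‖ := by
    rw [he1_def, real_inner_smul_left, real_inner_self_eq_norm_sq]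
    field_simp
  have he1u : ⟪e1, u⟫ = 0 := by
    rw [he1_def, real_inner_smul_left, hdu]; ring
  -- e3
  obtain ⟨e3, he3, hd3, hu3⟩ := exists_unit_orth d u
  have he13 : ⟪e1, e3⟫ = 0 := by
    rw [he1_def, real_inner_smul_left, hd3]; ring
  have hON := orthonormal_triple e1 u e3 he1 hu he3 he1u he13 hu3
  have hud : ⟪u, d⟫ = 0 := by rw [real_inner_comm]; exact hdu
  have he3d : ⟪e3, d⟫ = 0 := by rw [real_inner_comm]; exact hd3
  -- decomposition of a' - a
  have hv_dec : a' - a = u + (⟪d, a' - a⟫ / ‖d‖ ^ 2) • d := by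
    rw [hu_def, proj]; module
  have hv_u : ⟪u, a' - a⟫ = 1 := by
    conv_lhs => rw [hv_dec]
    rw [inner_add_right, real_inner_smul_right, hud, real_inner_self_eq_norm_sq, hu]
    norm_num
  have hv_3 : ⟪e3, a' - a⟫ = 0 := by
    rw [hv_dec, inner_add_right, real_inner_smul_right, he3d]
    rw [real_inner_comm] at hu3
    rw [hu3]; ring
  -- coordinates along M
  set β₀ : ℝ := ⟪u, b - a⟫ with hβ₀
  set γ₀ : ℝ := ⟪e3, b - a⟫ with hγ₀
  set p : ℝ := ⟪u, dM⟫ with hp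
  set q : ℝ := ⟪e3, dM⟫ with hq
  have hβt : ∀ t : ℝ, ⟪u, (b + t • dM) - a⟫ = β₀ + t * p := by
    intro t
    have : (b + t • dM) - a = (b - a) + t • dM := by module
    rw [this, inner_add_right, real_inner_smul_right]
  have hγt : ∀ t : ℝ, ⟪e3, (b + t • dM) - a⟫ = γ₀ + t * q := by
    intro t
    have : (b + t • dM) - a = (b - a) + t • dM := by module
    rw [this, inner_add_right, real_inner_smul_right]
  have hmemM : ∀ t : ℝ, b + t • dM ∈ M := by intro t; rw [hM]; exact ⟨t, rfl⟩
  -- F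
  have F1 : ∀ t : ℝ, 1 ≤ (β₀ + t * p) ^ 2 + (γ₀ + t * q) ^ 2 := by
    intro t
    have h := dist_line_sq_lower e1 u e3 hON d hd he1d hud he3d a (b + t • dM) ?_
    · rwa [hβt t, hγt t] at h
    · intro r
      exact hML1 _ (hmemM t) (a + r • d) (by rw [hL]; exact ⟨r, rfl⟩)
  have F2 : ∃ t : ℝ, (β₀ + t * p) ^ 2 + (γ₀ + t * q) ^ 2 = 1 := by
    obtain ⟨x, hx, y, hy, hxy⟩ := hML2
    rw [hM] at hx; rw [hL] at hy
    obtain ⟨t, rfl⟩ := hx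
    obtain ⟨r, rfl⟩ := hy
    refine ⟨t, le_antisymm ?_ (F1 t)⟩
    have h := dist_line_sq_upper e1 u e3 hON d hud he3d a (b + t • dM) r hxy
    rwa [hβt t, hγt t] at h
  -- G : coordinates relative to a'
  have hβt' : ∀ t : ℝ, ⟪u, (b + t • dM) - a'⟫ = β₀ + t * p - 1 := by
    intro t
    have : (b + t • dM) - a' = ((b + t • dM) - a) - (a' - a) := by module
    rw [this, inner_sub_right, hβt t, hv_u]
  have hγt' : ∀ t : ℝ, ⟪e3, (b + t • dM) - a'⟫ = γ₀ + t * q := by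
    intro t
    have : (b + t • dM) - a' = ((b + t • dM) - a) - (a' - a) := by module
    rw [this, inner_sub_right, hγt t, hv_3]; ring
  have G1 : ∀ t : ℝ, 1 ≤ (β₀ + t * p - 1) ^ 2 + (γ₀ + t * q) ^ 2 := by
    intro t
    have h := dist_line_sq_lower e1 u e3 hON d hd he1d hud he3d a' (b + t • dM) ?_
    · rwa [hβt' t, hγt' t] at h
    · intro r
      exact hML'1 _ (hmemM t) (a' + r • d) (by rw [hL']; exact ⟨r, rfl⟩)
  have G2 : ∃ t : ℝ, (β₀ + t * p - 1) ^ 2 + (γ₀ + t * q) ^ 2 = 1 := by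
    obtain ⟨x, hx, y, hy, hxy⟩ := hML'2
    rw [hM] at hx; rw [hL'] at hy
    obtain ⟨t, rfl⟩ := hx
    obtain ⟨r, rfl⟩ := hy
    refine ⟨t, le_antisymm ?_ (G1 t)⟩
    have h := dist_line_sq_upper e1 u e3 hON d hud he3d a' (b + t • dM) r hxy
    rwa [hβt' t, hγt' t] at h
  rcases twoD β₀ γ₀ p q F1 F2 G1 G2 with ⟨hp0, hq0⟩ | ⟨hq0, hγ1⟩
  · -- dM parallel to d
    left
    have hrep := repr_triple e1 u e3 hON dM
    rw [← hp, ← hq, hp0, hq0] at hrep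
    refine ⟨⟪e1, dM⟫ * ‖d‖⁻¹, ?_⟩
    conv_lhs => rw [hrep]
    rw [zero_smul, zero_smul, add_zero, add_zero, he1_def, smul_smul]
  · -- the plane
    right
    refine ⟨γ₀ • e3, ?_, ?_, ?_, ?_⟩
    · rw [norm_smul, he3, mul_one]
      have : |γ₀| = 1 := by nlinarith [abs_nonneg γ₀, sq_abs γ₀]
      simpa using this
    · rw [real_inner_smul_left, he3d]; ring
    · rw [real_inner_smul_left, hv_3]; ring
    · intro x hx
      rw [hM] at hx
      obtain ⟨t, rfl⟩ := hx
      rw [real_inner_smul_right, real_inner_comm, hγt t, hq0]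
      ring_nf
      linarith [hγ1]
lemma line_reparam (q e : EuclideanSpace ℝ (Fin 3)) (c : ℝ) (hc : c ≠ 0) :
    {x : EuclideanSpace ℝ (Fin 3) | ∃ t : ℝ, x = q + t • (c • e)} = {x | ∃ t : ℝ, x = q + t • e} := by
  ext x
  constructor
  · rintro ⟨t, rfl⟩; exact ⟨t * c, by rw [smul_smul]⟩
  · rintro ⟨t, rfl⟩; exact ⟨t / c, by rw [smul_smul, div_mul_cancel₀ _ hc]⟩

lemma gap_of_lines (e : E) (he : e ≠ 0) (q1 q2 : E) (S1 S2 : Set E)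
    (hS1 : S1 = {x : E | ∃ t : ℝ, x = q1 + t • e}) (hS2 : S2 = {x : E | ∃ t : ℝ, x = q2 + t • e})
    (h1 : ∀ x ∈ S1, ∀ y ∈ S2, 1 ≤ dist x y) (h2 : ∃ x ∈ S1, ∃ y ∈ S2, dist x y = 1) :
    ‖proj e (q2 - q1)‖ = 1 := by
  apply parallel_gap e _ he
  · intro c
    have h := h1 q1 (by rw [hS1]; exact ⟨0, by simp⟩) (q2 + c • e) (by rw [hS2]; exact ⟨c, rfl⟩)
    rw [dist_eq_norm] at h
    have he' : q1 - (q2 + c • e) = -((q2 - q1) + c • e) := by module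
    rwa [he', norm_neg] at h
  · obtain ⟨x, hx, y, hy, hxy⟩ := h2
    rw [hS1] at hx; rw [hS2] at hy
    obtain ⟨t, rfl⟩ := hx
    obtain ⟨r, rfl⟩ := hy
    refine ⟨r - t, ?_⟩
    rw [dist_eq_norm] at hxy
    have he' : q1 + t • e - (q2 + r • e) = -((q2 - q1) + (r - t) • e) := by module
    rwa [he', norm_neg] at hxy

lemma partB : ∀ (N : ℕ) (p d : Fin N → EuclideanSpace ℝ (Fin 3)), (∀ k, d k ≠ 0) →
    ∀ L : Fin N → Set (EuclideanSpace ℝ (Fin 3)),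
    (∀ k, L k = {x | ∃ t : ℝ, x = p k + t • d k}) →
    (∀ k l, k ≠ l →
      (∀ x ∈ L k, ∀ y ∈ L l, 1 ≤ dist x y) ∧ (∃ x ∈ L k, ∃ y ∈ L l, dist x y = 1)) →
    (∃ i j : Fin N, i ≠ j ∧ (∃ c : ℝ, d j = c • d i) ∧
      ∀ k, k ≠ i → k ≠ j → ¬ ∃ c : ℝ, d k = c • d i) →
    N ≤ 4 := by
  classical
  intro N p d hd L hL hdist hpar
  obtain ⟨i, j, hij, ⟨c, hc⟩, hno⟩ := hpar
  by_contra hN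
  push_neg at hN
  have h5 : 5 ≤ N := hN
  -- three indices distinct from i, j and each other
  set s : Finset (Fin N) := Finset.univ \ {i, j} with hs_def
  have hscard : 3 ≤ s.card := by
    have h2 : ({i, j} : Finset (Fin N)).card ≤ 2 :=
      (Finset.card_insert_le _ _).trans (by simp)
    have := Finset.card_sdiff_of_subset (Finset.subset_univ ({i, j} : Finset (Fin N)))
    rw [hs_def, this, Finset.card_univ, Fintype.card_fin]
    omega
  obtain ⟨k1, hk1⟩ := Finset.card_pos.mp (by omega : 0 < s.card)
  have hcard1 : 2 ≤ (s.erase k1).card := by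
    rw [Finset.card_erase_of_mem hk1]; omega
  obtain ⟨k2, hk2⟩ := Finset.card_pos.mp (by omega : 0 < (s.erase k1).card)
  have hcard2 : 1 ≤ ((s.erase k1).erase k2).card := by
    rw [Finset.card_erase_of_mem hk2]; omega
  obtain ⟨k3, hk3⟩ := Finset.card_pos.mp (by omega : 0 < ((s.erase k1).erase k2).card)
  obtain ⟨hk32, hk3'⟩ := Finset.mem_erase.mp hk3
  obtain ⟨hk31, hk3s⟩ := Finset.mem_erase.mp hk3'
  obtain ⟨hk21, hk2s⟩ := Finset.mem_erase.mp hk2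
  have hnotij : ∀ k : Fin N, k ∈ s → k ≠ i ∧ k ≠ j := by
    intro k hk
    rw [hs_def, Finset.mem_sdiff] at hk
    simp only [Finset.mem_insert, Finset.mem_singleton] at hk
    exact ⟨fun h => hk.2 (Or.inl h), fun h => hk.2 (Or.inr h)⟩
  obtain ⟨h1i, h1j⟩ := hnotij k1 hk1
  obtain ⟨h2i, h2j⟩ := hnotij k2 hk2s
  obtain ⟨h3i, h3j⟩ := hnotij k3 hk3s
  -- basic setup
  have hc0 : c ≠ 0 := by
    intro h; rw [h, zero_smul] at hc; exact hd j hc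
  have hLj : L j = {x | ∃ t : ℝ, x = p j + t • d i} := by
    rw [hL j, hc, line_reparam _ _ c hc0]
  have hsep : ∀ a : ℝ, a • d i ≠ p j - p i := by
    intro a ha
    have hmemi : p j ∈ L i := by
      rw [hL i]; exact ⟨a, by rw [ha]; module⟩
    have hmemj : p j ∈ L j := by rw [hL j]; exact ⟨0, by simp⟩
    have := (hdist i j hij).1 (p j) hmemi (p j) hmemj
    simp at this
    linarith
  have hindij : LinearIndependent ℝ ![p j - p i, d i] := by
    rw [linearIndependent_fin2]
    constructor
    · simpa using hd i
    · exact hsep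
  -- apply part (a) to each of the three lines
  have key : ∀ k : Fin N, k ≠ i → k ≠ j →
      ∃ nv : EuclideanSpace ℝ (Fin 3), ‖nv‖ = 1 ∧ ⟪nv, d i⟫ = 0 ∧ ⟪nv, p j - p i⟫ = 0 ∧
        ∀ x ∈ L k, ⟪x - p i, nv⟫ = 1 := by
    intro k hki hkj
    rcases partA (p i) (p j) (d i) (hd i) (L i) (L j) (hL i) hLj (hdist i j hij)
      (p k) (d k) (hd k) (L k) (hL k) (hdist k i hki) (hdist k j hkj) with hpar' | h
    · exact absurd hpar' (hno k hki hkj)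
    · exact h
  obtain ⟨nv1, hnv1n, hnv1d, hnv1v, hnv1P⟩ := key k1 h1i h1j
  obtain ⟨nv2, hnv2n, hnv2d, hnv2v, hnv2P⟩ := key k2 h2i h2j
  obtain ⟨nv3, hnv3n, hnv3d, hnv3v, hnv3P⟩ := key k3 h3i h3j
  -- all nv equal up to sign, and opposite signs are impossible
  have hsign : ∀ (k l : Fin N), k ≠ l → ∀ nvk nvl : EuclideanSpace ℝ (Fin 3),
      ‖nvk‖ = 1 → (∀ x ∈ L k, ⟪x - p i, nvk⟫ = 1) → (∀ x ∈ L l, ⟪x - p i, nvl⟫ = 1) →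
      nvl = -nvk → False := by
    intro k l hkl nvk nvl hnk hPk hPl hneg
    obtain ⟨x, hx, y, hy, hxy⟩ := (hdist k l hkl).2
    have h1 := hPk x hx
    have h2 := hPl y hy
    rw [hneg] at h2
    have h2' : ⟪y - p i, nvk⟫ = -1 := by
      rw [inner_neg_right] at h2; linarith
    have hinner : ⟪x - y, nvk⟫ = 2 := by
      have : x - y = (x - p i) - (y - p i) := by module
      rw [this, inner_sub_left, h1, h2']; norm_num
    have hcs := real_inner_le_norm (x - y) nvk
    rw [hinner, hnk, mul_one, ← dist_eq_norm, hxy] at hcs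
    linarith
  have hsgn2 : nv2 = nv1 := by
    rcases orth2_sign (p j - p i) (d i) nv1 nv2 hindij
      (by rw [real_inner_comm]; exact hnv1v) (by rw [real_inner_comm]; exact hnv1d)
      (by rw [real_inner_comm]; exact hnv2v) (by rw [real_inner_comm]; exact hnv2d)
      hnv1n hnv2n with h | h
    · exact h
    · exact absurd h (fun hh => hsign k1 k2 hk21.symm nv1 nv2 hnv1n hnv1P hnv2P hh |>.elim)
  have hsgn3 : nv3 = nv1 := by
    rcases orth2_sign (p j - p i) (d i) nv1 nv3 hindij
      (by rw [real_inner_comm]; exact hnv1v) (by rw [real_inner_comm]; exact hnv1d)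
      (by rw [real_inner_comm]; exact hnv3v) (by rw [real_inner_comm]; exact hnv3d)
      hnv1n hnv3n with h | h
    · exact h
    · exact absurd h (fun hh => hsign k1 k3 hk31.symm nv1 nv3 hnv1n hnv1P hnv3P hh |>.elim)
  rw [hsgn2] at hnv2P
  rw [hsgn3] at hnv3P
  set nv := nv1
  have hnv0 : nv ≠ 0 := by
    intro h; rw [h] at hnv1n; simp at hnv1n
  -- direction of any line in the plane is orthogonal to nv
  have hdir : ∀ k : Fin N, (∀ x ∈ L k, ⟪x - p i, nv⟫ = 1) → ⟪nv, d k⟫ = 0 := by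
    intro k hPk
    have h0 := hPk (p k + (0:ℝ) • d k) (by rw [hL k]; exact ⟨0, rfl⟩)
    have h1 := hPk (p k + (1:ℝ) • d k) (by rw [hL k]; exact ⟨1, rfl⟩)
    have : ⟪d k, nv⟫ = 0 := by
      have hsub : (p k + (1:ℝ) • d k - p i) - (p k + (0:ℝ) • d k - p i) = d k := by module
      rw [← hsub, inner_sub_left, h0, h1]; ring
    rw [real_inner_comm]; exact this
  have hdk1 := hdir k1 hnv1P
  have hdk2 := hdir k2 hnv2P
  have hdk3 := hdir k3 hnv3P
  -- offsets between plane lines are orthogonal to nv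
  have hoffs : ∀ k l : Fin N, (∀ x ∈ L k, ⟪x - p i, nv⟫ = 1) → (∀ x ∈ L l, ⟪x - p i, nv⟫ = 1) →
      ⟪nv, p l - p k⟫ = 0 := by
    intro k l hPk hPl
    have h1 := hPk (p k) (by rw [hL k]; exact ⟨0, by simp⟩)
    have h2 := hPl (p l) (by rw [hL l]; exact ⟨0, by simp⟩)
    have : ⟪p l - p k, nv⟫ = 0 := by
      have hsub : p l - p k = (p l - p i) - (p k - p i) := by module
      rw [hsub, inner_sub_left, h1, h2]; ring
    rw [real_inner_comm]; exact this
  -- any two of the three lines are parallel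
  have hparallel : ∀ k l : Fin N, k ≠ l →
      (∀ x ∈ L k, ⟪x - p i, nv⟫ = 1) → (∀ x ∈ L l, ⟪x - p i, nv⟫ = 1) →
      ∃ c' : ℝ, d l = c' • d k := by
    intro k l hkl hPk hPl
    by_contra hnp
    push_neg at hnp
    have hindkl : LinearIndependent ℝ ![d k, d l] := by
      rw [linearIndependent_fin2]
      refine ⟨by simpa using hd l, ?_⟩
      intro a ha
      have ha' : a • d l = d k := ha
      rcases eq_or_ne a 0 with rfl | ha0
      · rw [zero_smul] at ha'; exact hd k ha'.symm
      · exact hnp a⁻¹ (by rw [← ha', smul_smul, inv_mul_cancel₀ ha0, one_smul])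
    obtain ⟨sc, tc, hst⟩ := mem_span_pair_of_orth (d k) (d l) nv (p l - p k) hindkl
      (hdir k hPk) (hdir l hPl) hnv0 (hoffs k l hPk hPl)
    have hxk : p k + sc • d k ∈ L k := by rw [hL k]; exact ⟨sc, rfl⟩
    have hxl : p k + sc • d k ∈ L l := by
      rw [hL l]
      refine ⟨-tc, ?_⟩
      have hpl : p l = p k + (sc • d k + tc • d l) := by
        rw [← hst]; module
      rw [hpl]; module
    have := (hdist k l hkl).1 _ hxk _ hxl
    simp at this
    linarith
  obtain ⟨c2, hc2⟩ := hparallel k1 k2 hk21.symm hnv1P hnv2P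
  obtain ⟨c3, hc3⟩ := hparallel k1 k3 hk31.symm hnv1P hnv3P
  have hc20 : c2 ≠ 0 := by intro h; rw [h, zero_smul] at hc2; exact hd k2 hc2
  have hc30 : c3 ≠ 0 := by intro h; rw [h, zero_smul] at hc3; exact hd k3 hc3
  set e : EuclideanSpace ℝ (Fin 3) := d k1 with he_def
  have hLk2 : L k2 = {x | ∃ t : ℝ, x = p k2 + t • e} := by
    rw [hL k2, hc2, line_reparam _ _ c2 hc20]
  have hLk3 : L k3 = {x | ∃ t : ℝ, x = p k3 + t • e} := by
    rw [hL k3, hc3, line_reparam _ _ c3 hc30]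
  have hLk1 : L k1 = {x | ∃ t : ℝ, x = p k1 + t • e} := hL k1
  have he0 : e ≠ 0 := hd k1
  -- three gaps of norm one
  have hw12 := gap_of_lines e he0 (p k1) (p k2) (L k1) (L k2) hLk1 hLk2
    (hdist k1 k2 hk21.symm).1 (hdist k1 k2 hk21.symm).2
  have hw13 := gap_of_lines e he0 (p k1) (p k3) (L k1) (L k3) hLk1 hLk3
    (hdist k1 k3 hk31.symm).1 (hdist k1 k3 hk31.symm).2
  have hw23 := gap_of_lines e he0 (p k2) (p k3) (L k2) (L k3) hLk2 hLk3
    (hdist k2 k3 hk32.symm).1 (hdist k2 k3 hk32.symm).2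
  set w12 := proj e (p k2 - p k1) with hw12_def
  set w13 := proj e (p k3 - p k1) with hw13_def
  have hw23eq : proj e (p k3 - p k2) = w13 - w12 := by
    have hsplit : p k3 - p k2 = (p k3 - p k1) - (p k2 - p k1) := by module
    rw [hsplit, proj_sub, hw13_def, hw12_def]
  rw [hw23eq] at hw23
  -- both gaps are orthogonal to e and nv
  have hew12 : ⟪e, w12⟫ = 0 := proj_inner e _ he0
  have hew13 : ⟪e, w13⟫ = 0 := proj_inner e _ he0
  have hnve : ⟪nv, e⟫ = 0 := hdk1
  have hnvw12 : ⟪nv, w12⟫ = 0 := proj_orth e _ nv (hoffs k1 k2 hnv1P hnv2P) hnve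
  have hnvw13 : ⟪nv, w13⟫ = 0 := proj_orth e _ nv (hoffs k1 k3 hnv1P hnv3P) hnve
  -- e and nv are linearly independent
  have hindenv : LinearIndependent ℝ ![e, nv] := by
    rw [linearIndependent_fin2]
    refine ⟨by simpa using hnv0, ?_⟩
    intro a ha
    have ha' : a • nv = e := ha
    have hae : ⟪nv, e⟫ = a * ‖nv‖ ^ 2 := by
      rw [← ha', real_inner_smul_right, real_inner_self_eq_norm_sq]
    rw [hnve, hnv1n] at hae
    norm_num at hae
    apply he0
    rw [← ha', ← hae, zero_smul]
  rcases orth2_sign e nv w12 w13 hindenv hew12 hnvw12 hew13 hnvw13 hw12 hw13 with h | h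
  · rw [h] at hw23
    simp at hw23
  · rw [h] at hw23
    have : ‖-w12 - w12‖ = 2 := by
      have : -w12 - w12 = (-2 : ℝ) • w12 := by module
      rw [this, norm_smul, hw12]
      norm_num
    rw [this] at hw23
    norm_num at hw23
end
end Helpers

/-- (a) If `L = {a + t·d}` and `L' = {a' + t·d}` are parallel lines in `ℝ³` at distance
exactly 1 (spanning a plane `P` through `a` with directions `d` and `a' - a`), then any
line `M` at distance exactly 1 from both `L` and `L'` is either parallel to `L` or lies
in one of the two planes parallel to `P` at distance 1 from `P` (expressed via a unit
normal `nv` of `P` with `⟪x - a, nv⟫ = 1` for all `x ∈ M`).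
(b) Any collection of lines in `ℝ³` pairwise at distance exactly 1 that contains two
parallel lines and no third line parallel to them has at most 4 elements.
Here "distance exactly 1" means all pairwise point distances are `≥ 1` and distance 1
is attained. -/
theorem parallel_pair_structure :
    (∀ (a a' d : EuclideanSpace ℝ (Fin 3)), d ≠ 0 →
      ∀ (L L' : Set (EuclideanSpace ℝ (Fin 3))),
      L = {x | ∃ t : ℝ, x = a + t • d} → L' = {x | ∃ t : ℝ, x = a' + t • d} →
      ((∀ x ∈ L, ∀ y ∈ L', 1 ≤ dist x y) ∧ (∃ x ∈ L, ∃ y ∈ L', dist x y = 1)) →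
      ∀ (b dM : EuclideanSpace ℝ (Fin 3)), dM ≠ 0 →
      ∀ (M : Set (EuclideanSpace ℝ (Fin 3))), M = {x | ∃ t : ℝ, x = b + t • dM} →
      ((∀ x ∈ M, ∀ y ∈ L, 1 ≤ dist x y) ∧ (∃ x ∈ M, ∃ y ∈ L, dist x y = 1)) →
      ((∀ x ∈ M, ∀ y ∈ L', 1 ≤ dist x y) ∧ (∃ x ∈ M, ∃ y ∈ L', dist x y = 1)) →
      (∃ c : ℝ, dM = c • d) ∨
      (∃ nv : EuclideanSpace ℝ (Fin 3), ‖nv‖ = 1 ∧ ⟪nv, d⟫ = 0 ∧ ⟪nv, a' - a⟫ = 0 ∧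
        ∀ x ∈ M, ⟪x - a, nv⟫ = 1)) ∧
    (∀ (N : ℕ) (p d : Fin N → EuclideanSpace ℝ (Fin 3)), (∀ k, d k ≠ 0) →
      ∀ L : Fin N → Set (EuclideanSpace ℝ (Fin 3)),
      (∀ k, L k = {x | ∃ t : ℝ, x = p k + t • d k}) →
      (∀ k l, k ≠ l →
        (∀ x ∈ L k, ∀ y ∈ L l, 1 ≤ dist x y) ∧ (∃ x ∈ L k, ∃ y ∈ L l, dist x y = 1)) →
      (∃ i j : Fin N, i ≠ j ∧ (∃ c : ℝ, d j = c • d i) ∧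
        ∀ k, k ≠ i → k ≠ j → ¬ ∃ c : ℝ, d k = c • d i) →
      N ≤ 4) := by
  exact ⟨partA, partB⟩
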